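/- Let D ≥ 1, M ≥ 2, u ∈ ℝ^D, θ > 0 and j ∈ {1,…,D}. Let Π : F_{M+1}(u,θ) → F_M(u,θ) be the truncation that discards the terms with |α| = M+1. Fix m ∈ {0,…,M}, let x_i be a zero of He_{m+1} and p_{i,m} the unique polynomial of degree at most m taking the value 1 at x_i and 0 at the other zeros of He_{m+1}. Then for every multi-index α with |α| = M − m and α_j = 0, writing v = (ξ − u)/√θ, one has Π[ v_j · p_{i,m}(v_j) · 𝓗_{θ,α}(v) ] = x_i · p_{i,m}(v_j) · 𝓗_{θ,α}(v); i.e., the function p_{i,m}(v_j) 𝓗_{θ,α}(v) is an eigenvector of f ↦ Π(v_j f) with eigenvalue x_i. -/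

import Mathlib

open Filter Topology Polynomial


open MeasureTheory

/-- The probabilists' Hermite polynomial `He n`, evaluated at a real number. -/
noncomputable def He (n : ℕ) (x : ℝ) : ℝ :=
  Polynomial.aeval x (Polynomial.hermite n)


noncomputable def Hp (n : ℕ) : ℝ[X] := (Polynomial.hermite n).map (Int.castRingHom ℝ)

lemma Hp_eval (n : ℕ) (x : ℝ) : (Hp n).eval x = He n x := by
  rw [Hp, He, Polynomial.aeval_def, Polynomial.eval₂_eq_eval_map]
  norm_num

lemma Hp_monic (n : ℕ) : (Hp n).Monic :=
  (Polynomial.hermite_monic n).map _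

lemma Hp_natDegree (n : ℕ) : (Hp n).natDegree = n := by
  rw [Hp, Polynomial.natDegree_map_eq_of_injective (fun a b => by simp), Polynomial.natDegree_hermite]

lemma He_succ (n : ℕ) (x : ℝ) :
    He (n+1) x = x * He n x - Polynomial.aeval x (Polynomial.derivative (Polynomial.hermite n)) := by
  rw [He, Polynomial.hermite_succ]
  simp [He]

lemma hasDerivAt_He_gauss (n : ℕ) (x : ℝ) :
    HasDerivAt (fun y => He n y * Real.exp (-(y^2/2)))
      (-(He (n+1) x * Real.exp (-(x^2/2)))) x := by
  have h1 : HasDerivAt (fun y => He n y)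
      (Polynomial.aeval x (Polynomial.derivative (Polynomial.hermite n))) x :=
    Polynomial.hasDerivAt_aeval (q := Polynomial.hermite n) x
  have h2 : HasDerivAt (fun y : ℝ => -(y^2/2)) (-x) x := by
    have := ((hasDerivAt_pow 2 x).div_const 2).fun_neg
    simpa using this
  have h3 : HasDerivAt (fun y : ℝ => Real.exp (-(y^2/2))) (-x * Real.exp (-(x^2/2))) x := by
    simpa [mul_comm] using h2.exp
  have := h1.fun_mul h3
  refine this.congr_deriv ?_
  rw [He_succ]
  ring

lemma tendsto_pow_gauss (k : ℕ) :
    Tendsto (fun x : ℝ => x^k * Real.exp (-(x^2/2))) atTop (𝓝 0) := by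
  have h1 : Tendsto (fun x : ℝ => x^k * Real.exp (-x)) atTop (𝓝 0) :=
    Real.tendsto_pow_mul_exp_neg_atTop_nhds_zero k
  have h2 : Tendsto (fun x : ℝ => Real.exp (x - x^2/2)) atTop (𝓝 0) := by
    apply Real.tendsto_exp_atBot.comp
    have : Tendsto (fun x : ℝ => x * (1 - x/2)) atTop atBot := by
      apply Tendsto.atTop_mul_atBot₀ tendsto_id
      apply tendsto_atBot_add_const_left
      have h3 : Tendsto (fun x : ℝ => x/2) atTop atTop :=
        tendsto_id.atTop_div_const (by norm_num)
      exact tendsto_neg_atTop_atBot.comp h3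
    convert this using 2 with x
    ring
  have := h1.mul h2
  simp only [mul_zero] at this
  convert this using 2 with x
  rw [mul_assoc, ← Real.exp_add]
  ring_nf

lemma tendsto_poly_gauss (q : ℝ[X]) :
    Tendsto (fun x : ℝ => q.eval x * Real.exp (-(x^2/2))) atTop (𝓝 0) := by
  have : (fun x : ℝ => q.eval x * Real.exp (-(x^2/2)))
      = fun x : ℝ => ∑ i ∈ Finset.range (q.natDegree + 1),
        q.coeff i * (x^i * Real.exp (-(x^2/2))) := by
    funext x
    rw [Polynomial.eval_eq_sum_range, Finset.sum_mul]
    congr 1 with i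
    ring
  rw [this]
  have h0 : (0:ℝ) = ∑ i ∈ Finset.range (q.natDegree + 1), q.coeff i * 0 := by simp
  rw [h0]
  exact tendsto_finset_sum _ fun i _ => (tendsto_pow_gauss i).const_mul _

lemma tendsto_poly_gauss_atBot (q : ℝ[X]) :
    Tendsto (fun x : ℝ => q.eval x * Real.exp (-(x^2/2))) atBot (𝓝 0) := by
  have h := tendsto_poly_gauss (q.comp (-Polynomial.X))
  have h2 := h.comp tendsto_neg_atBot_atTop
  convert h2 using 2 with x
  simp [Function.comp, Polynomial.eval_comp]

/-- Rolle-type: zero at a, tends to 0 at +infinity, nonzero somewhere to the right. -/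
lemma exists_deriv_zero_right_aux (g : ℝ → ℝ) (hg : Differentiable ℝ g) (a b : ℝ)
    (hab : a < b) (hga : g a = 0) (hgb : 0 < g b) (hlim : Tendsto g atTop (𝓝 0)) :
    ∃ c, a < c ∧ deriv g c = 0 := by
  have hev : ∀ᶠ x in atTop, g x < g b := hlim.eventually_lt_const hgb
  obtain ⟨x₀, hx₀⟩ := hev.exists_forall_of_atTop
  set B := max x₀ (b + 1) with hB
  have hbB : b < B := lt_of_lt_of_le (lt_add_one b) (le_max_right _ _)
  have haB : a < B := hab.trans hbB
  have hgB : g B < g b := hx₀ B (le_max_left _ _)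
  obtain ⟨c, hcmem, hcmax⟩ := (isCompact_Icc (a := a) (b := B)).exists_isMaxOn
    (Set.nonempty_Icc.2 haB.le) (hg.continuous.continuousOn)
  have hgbc : g b ≤ g c := hcmax ⟨hab.le, hbB.le⟩
  have hca : c ≠ a := fun h => by rw [h, hga] at hgbc; exact absurd hgbc (not_le.2 hgb)
  have hcB : c ≠ B := fun h => by rw [h] at hgbc; exact absurd (hgB.trans_le hgbc) (lt_irrefl _)
  have hc : c ∈ Set.Ioo a B :=
    ⟨lt_of_le_of_ne hcmem.1 (Ne.symm hca), lt_of_le_of_ne hcmem.2 hcB⟩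
  refine ⟨c, hc.1, ?_⟩
  have : IsLocalMax g c := hcmax.isLocalMax (Icc_mem_nhds hc.1 hc.2)
  exact this.deriv_eq_zero

lemma exists_deriv_zero_right (g : ℝ → ℝ) (hg : Differentiable ℝ g) (a b : ℝ)
    (hab : a < b) (hga : g a = 0) (hgb : g b ≠ 0) (hlim : Tendsto g atTop (𝓝 0)) :
    ∃ c, a < c ∧ deriv g c = 0 := by
  rcases hgb.lt_or_gt with h | h
  · have hneg : 0 < (-g) b := by simpa using h
    obtain ⟨c, hc1, hc2⟩ := exists_deriv_zero_right_aux (-g) hg.neg a b hab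
      (by simp [hga]) hneg (by have := hlim.neg; rw [neg_zero] at this; exact this)
    refine ⟨c, hc1, ?_⟩
    have h0 : deriv (fun y => -g y) c = 0 := hc2
    rw [deriv.fun_neg] at h0
    linarith
  · exact exists_deriv_zero_right_aux g hg a b hab hga h hlim

lemma exists_deriv_zero_left (g : ℝ → ℝ) (hg : Differentiable ℝ g) (a b : ℝ)
    (hab : b < a) (hga : g a = 0) (hgb : g b ≠ 0) (hlim : Tendsto g atBot (𝓝 0)) :
    ∃ c, c < a ∧ deriv g c = 0 := by
  set h : ℝ → ℝ := fun x => g (-x) with hh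
  have hdiff : Differentiable ℝ h := hg.comp differentiable_neg
  obtain ⟨c, hc1, hc2⟩ := exists_deriv_zero_right h hdiff (-a) (-b) (by linarith)
    (by simp [hh, hga]) (by simpa [hh] using hgb) (hlim.comp tendsto_neg_atTop_atBot)
  refine ⟨-c, by linarith, ?_⟩
  have hd : deriv h c = -deriv g (-c) := by
    have : HasDerivAt h (deriv g (-c) * (-1)) c :=
      HasDerivAt.comp c (hg (-c)).hasDerivAt (hasDerivAt_neg c)
    rw [this.deriv]; ring
  rw [hd] at hc2
  linarith

lemma He_zero_eval (y : ℝ) : He 0 y = 1 := by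
  simp [He, Polynomial.hermite_zero]

lemma hermite_expand : ∀ (k : ℕ) (p : ℝ[X]), p.degree ≤ k →
    ∃ c : ℕ → ℝ, ∀ y, p.eval y = ∑ l ∈ Finset.range (k+1), c l * He l y := by
  intro k
  induction k with
  | zero =>
    intro p hdeg
    refine ⟨fun _ => p.coeff 0, fun y => ?_⟩
    have h0 : p = Polynomial.C (p.coeff 0) :=
      Polynomial.eq_C_of_degree_le_zero (p := p) (by exact_mod_cast hdeg)
    conv_lhs => rw [h0]
    simp [He_zero_eval]
  | succ k ih =>
    intro p hdeg
    set q := p - Polynomial.C (p.coeff (k+1)) * Hp (k+1) with hqdef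
    have hq : q.degree ≤ k := by
      rw [Polynomial.degree_le_iff_coeff_zero]
      intro i hi
      have hik : k + 1 ≤ i := Nat.succ_le_of_lt (by exact_mod_cast hi)
      simp only [hqdef, Polynomial.coeff_sub, Polynomial.coeff_C_mul]
      rcases eq_or_lt_of_le hik with h | h
      · have hco : (Hp (k+1)).coeff (k+1) = 1 := by
          have h2 := (Hp_monic (k+1)).coeff_natDegree
          rwa [Hp_natDegree] at h2
        rw [← h, hco]
        ring
      · have h1 : p.coeff i = 0 :=
          Polynomial.coeff_eq_zero_of_degree_lt (lt_of_le_of_lt hdeg (by exact_mod_cast h))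
        have h2 : (Hp (k+1)).coeff i = 0 :=
          Polynomial.coeff_eq_zero_of_natDegree_lt (by rw [Hp_natDegree]; omega)
        rw [h1, h2, mul_zero, sub_zero]
    obtain ⟨c', hc'⟩ := ih q hq
    refine ⟨fun l => if l = k+1 then p.coeff (k+1) else c' l, fun y => ?_⟩
    have hpy : p.eval y = q.eval y + p.coeff (k+1) * He (k+1) y := by
      simp [hqdef, Hp_eval]
    rw [hpy, Finset.sum_range_succ, hc' y]
    simp only [if_pos rfl]
    congr 1
    apply Finset.sum_congr rfl
    intro l hl
    rw [if_neg (by simp at hl; omega)]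

lemma He_roots_finite (n : ℕ) : {x : ℝ | He n x = 0}.Finite := by
  have h : {x : ℝ | He n x = 0} = {x : ℝ | (Hp n).IsRoot x} := by
    ext x; simp [Polynomial.IsRoot, Hp_eval]
  rw [h]
  exact Polynomial.finite_setOf_isRoot (Hp_monic n).ne_zero

lemma exists_nonroot_gt (n : ℕ) (a : ℝ) : ∃ b, a < b ∧ He n b ≠ 0 := by
  have h1 : ¬ (Set.Ioi a ⊆ {x : ℝ | He n x = 0}) :=
    fun h => (Set.Ioi_infinite a) ((He_roots_finite n).subset h)
  obtain ⟨b, hb1, hb2⟩ := Set.not_subset.mp h1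
  exact ⟨b, hb1, hb2⟩

lemma exists_nonroot_lt (n : ℕ) (a : ℝ) : ∃ b, b < a ∧ He n b ≠ 0 := by
  have h1 : ¬ (Set.Iio a ⊆ {x : ℝ | He n x = 0}) :=
    fun h => (Set.Iio_infinite a) ((He_roots_finite n).subset h)
  obtain ⟨b, hb1, hb2⟩ := Set.not_subset.mp h1
  exact ⟨b, hb1, hb2⟩

theorem He_roots_exist : ∀ n : ℕ, ∃ r : Fin n → ℝ, StrictMono r ∧ ∀ i, He n (r i) = 0 := by
  intro n
  induction n with
  | zero => exact ⟨Fin.elim0, fun a => a.elim0, fun a => a.elim0⟩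
  | succ k ih =>
    rcases Nat.eq_zero_or_pos k with hk | hk
    · subst hk
      refine ⟨fun _ => 0, fun a b hab => absurd (Fin.ext (by omega : (a:ℕ) = (b:ℕ))) (ne_of_lt hab), ?_⟩
      intro i
      simp [He, Polynomial.hermite_one]
    obtain ⟨r, hrmono, hroots⟩ := ih
    set g : ℝ → ℝ := fun x => He k x * Real.exp (-(x^2/2)) with hgdef
    have hgd : Differentiable ℝ g := fun x => (hasDerivAt_He_gauss k x).differentiableAt
    have hgz : ∀ x, He k x = 0 → g x = 0 := fun x hx => by simp [hgdef, hx]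
    have hgnz : ∀ x, He k x ≠ 0 → g x ≠ 0 := fun x hx =>
      mul_ne_zero hx (Real.exp_ne_zero _)
    have hdroot : ∀ c, deriv g c = 0 → He (k+1) c = 0 := by
      intro c hc
      have h1 := (hasDerivAt_He_gauss k c).deriv
      rw [← hgdef] at h1
      rw [h1] at hc
      have h2 := Real.exp_ne_zero (-(c^2/2))
      have := neg_eq_zero.mp hc
      exact (mul_eq_zero.mp this).resolve_right h2
    have hlimtop : Tendsto g atTop (𝓝 0) := by
      have := tendsto_poly_gauss (Hp k)
      simp only [Hp_eval] at this
      exact this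
    have hlimbot : Tendsto g atBot (𝓝 0) := by
      have := tendsto_poly_gauss_atBot (Hp k)
      simp only [Hp_eval] at this
      exact this
    -- left tail root
    have hk0 : (0:ℕ) < k := hk
    set i0 : Fin k := ⟨0, hk0⟩
    obtain ⟨b₁, hb₁, hb₁nz⟩ := exists_nonroot_lt k (r i0)
    obtain ⟨sL, hsL, hsLd⟩ := exists_deriv_zero_left g hgd (r i0) b₁ hb₁
      (hgz _ (hroots i0)) (hgnz _ hb₁nz) hlimbot
    have hsLroot : He (k+1) sL = 0 := hdroot _ hsLd
    -- right tail root
    set iL : Fin k := ⟨k-1, by omega⟩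
    obtain ⟨b₂, hb₂, hb₂nz⟩ := exists_nonroot_gt k (r iL)
    obtain ⟨sR, hsR, hsRd⟩ := exists_deriv_zero_right g hgd (r iL) b₂ hb₂
      (hgz _ (hroots iL)) (hgnz _ hb₂nz) hlimtop
    have hsRroot : He (k+1) sR = 0 := hdroot _ hsRd
    -- middle/tail roots function
    have hT : ∀ i : Fin k, ∃ c : ℝ, He (k+1) c = 0 ∧ r i < c ∧
        ∀ h : (i:ℕ)+1 < k, c < r ⟨(i:ℕ)+1, h⟩ := by
      intro i
      by_cases h : (i:ℕ)+1 < k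
      · have hlt : r i < r ⟨(i:ℕ)+1, h⟩ := hrmono (by simp [Fin.lt_def])
        obtain ⟨c, hc1, hc2⟩ := exists_deriv_eq_zero (f := g) hlt
          hgd.continuous.continuousOn
          (by rw [hgz _ (hroots i), hgz _ (hroots _)])
        exact ⟨c, hdroot _ hc2, hc1.1, fun h' => hc1.2⟩
      · have hi : i = iL := by
          apply Fin.ext
          simp only [iL]
          omega
        refine ⟨sR, hsRroot, ?_, fun h' => absurd h' h⟩
        rw [hi]; exact hsR
    choose t ht1 ht2 ht3 using hT
    have htmono : StrictMono t := by
      intro i j hij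
      have hj : (i:ℕ) + 1 < k := by
        have := j.isLt
        have : (i:ℕ) < (j:ℕ) := hij
        omega
      calc t i < r ⟨(i:ℕ)+1, hj⟩ := ht3 i hj
        _ ≤ r j := hrmono.monotone (by
            rw [Fin.le_def]
            exact_mod_cast hij)
        _ < t j := ht2 j
    refine ⟨Fin.cons sL t, ?_, ?_⟩
    · intro i j hij
      rcases Fin.eq_zero_or_eq_succ i with rfl | ⟨a, rfl⟩ <;>
        rcases Fin.eq_zero_or_eq_succ j with rfl | ⟨b, rfl⟩
      · exact absurd hij (lt_irrefl _)
      · simp only [Fin.cons_zero, Fin.cons_succ]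
        calc sL < r i0 := hsL
          _ ≤ r b := hrmono.monotone (by rw [Fin.le_def]; simp [i0])
          _ < t b := ht2 b
      · exact absurd hij (by simp)
      · simp only [Fin.cons_succ]
        exact htmono (by rwa [Fin.succ_lt_succ_iff] at hij)
    · intro i
      rcases Fin.eq_zero_or_eq_succ i with rfl | ⟨a, rfl⟩
      · simpa using hsLroot
      · simpa using ht1 a

lemma lagrange_factor (m : ℕ) (xi : ℝ) (hxi : He (m + 1) xi = 0)
    (p : Polynomial ℝ) (hdeg : p.degree ≤ m) (hpxi : p.eval xi = 1)
    (hpz : ∀ y : ℝ, He (m + 1) y = 0 → y ≠ xi → p.eval y = 0) :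
    ∀ y : ℝ, (y - xi) * p.eval y = p.coeff m * He (m+1) y := by
  obtain ⟨r, hrmono, hroots⟩ := He_roots_exist (m+1)
  set q : ℝ[X] := (Polynomial.X - Polynomial.C xi) * p - Polynomial.C (p.coeff m) * Hp (m+1)
    with hqdef
  have hp1 : ∀ l, m < l → p.coeff l = 0 := fun l hl =>
    Polynomial.coeff_eq_zero_of_degree_lt (lt_of_le_of_lt hdeg (by exact_mod_cast hl))
  have hdq : q.degree ≤ m := by
    rw [Polynomial.degree_le_iff_coeff_zero]
    intro i hi
    have him : m + 1 ≤ i := Nat.succ_le_of_lt (by exact_mod_cast hi)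
    obtain ⟨i', rfl⟩ : ∃ i', i = i' + 1 := ⟨i - 1, by omega⟩
    have e1 : q.coeff (i'+1) =
        p.coeff i' - xi * p.coeff (i'+1) - p.coeff m * (Hp (m+1)).coeff (i'+1) := by
      simp [hqdef, sub_mul, Polynomial.coeff_X_mul, Polynomial.coeff_sub,
        Polynomial.coeff_C_mul]
    rcases eq_or_lt_of_le him with h | h
    · obtain rfl : m = i' := by omega
      have hco : (Hp (m+1)).coeff (m+1) = 1 := by
        have h2 := (Hp_monic (m+1)).coeff_natDegree
        rwa [Hp_natDegree] at h2
      rw [e1, hco, hp1 (m+1) (by omega)]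
      ring
    · have h3 : (Hp (m+1)).coeff (i'+1) = 0 :=
        Polynomial.coeff_eq_zero_of_natDegree_lt (by rw [Hp_natDegree]; omega)
      rw [e1, h3, hp1 i' (by omega), hp1 (i'+1) (by omega)]
      ring
  have heval : ∀ i : Fin (m+1), q.eval (r i) = 0 := by
    intro i
    have hri : He (m+1) (r i) = 0 := hroots i
    simp only [hqdef, Polynomial.eval_sub, Polynomial.eval_mul, Polynomial.eval_X,
      Polynomial.eval_C, Hp_eval]
    rw [hri]
    by_cases hc : r i = xi
    · rw [hc]; ring
    · rw [hpz _ hri hc]; ring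
  have hq0 : q = 0 := by
    apply Polynomial.eq_zero_of_natDegree_lt_card_of_eval_eq_zero q hrmono.injective heval
    have hnd : q.natDegree ≤ m := Polynomial.natDegree_le_iff_degree_le.mpr hdq
    simp only [Fintype.card_fin]
    omega
  intro y
  have := congrArg (Polynomial.eval y) hq0
  simp only [hqdef, Polynomial.eval_sub, Polynomial.eval_mul, Polynomial.eval_X,
    Polynomial.eval_C, Polynomial.eval_zero, Hp_eval] at this
  linarith

/-- The basis function `𝓗_{θ,α}(v) = ∏_d (2π)^(-1/2) θ^(-(α_d+1)/2) He_{α_d}(v_d) e^(-v_d²/2)`. -/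
noncomputable def Hb {D : ℕ} (θ : ℝ) (α : Fin D → ℕ) (v : Fin D → ℝ) : ℝ :=
  ∏ d, ((Real.sqrt (2 * Real.pi))⁻¹ * θ ^ (-(((α d : ℝ) + 1) / 2)) * He (α d) (v d) *
    Real.exp (-(v d) ^ 2 / 2))

lemma Hb_mul {D : ℕ} (θ : ℝ) (hθ : 0 < θ) (α : Fin D → ℕ) (j : Fin D) (hαj : α j = 0)
    (l : ℕ) (v : Fin D → ℝ) :
    He l (v j) * Hb θ α v = θ ^ ((l:ℝ)/2) * Hb θ (Function.update α j l) v := by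
  classical
  have hsplit : ∀ β : Fin D → ℕ, Hb θ β v =
      ((Real.sqrt (2 * Real.pi))⁻¹ * θ ^ (-(((β j : ℝ) + 1) / 2)) * He (β j) (v j) *
        Real.exp (-(v j) ^ 2 / 2)) *
      ∏ d ∈ ({j}ᶜ : Finset (Fin D)), ((Real.sqrt (2 * Real.pi))⁻¹ *
        θ ^ (-(((β d : ℝ) + 1) / 2)) * He (β d) (v d) * Real.exp (-(v d) ^ 2 / 2)) := by
    intro β
    rw [Hb, Fintype.prod_eq_mul_prod_compl j]
  rw [hsplit, hsplit]
  have hrest : (∏ d ∈ ({j}ᶜ : Finset (Fin D)), ((Real.sqrt (2 * Real.pi))⁻¹ *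
      θ ^ (-(((Function.update α j l d : ℝ) + 1) / 2)) * He (Function.update α j l d) (v d) *
      Real.exp (-(v d) ^ 2 / 2)))
      = ∏ d ∈ ({j}ᶜ : Finset (Fin D)), ((Real.sqrt (2 * Real.pi))⁻¹ *
      θ ^ (-(((α d : ℝ) + 1) / 2)) * He (α d) (v d) * Real.exp (-(v d) ^ 2 / 2)) := by
    apply Finset.prod_congr rfl
    intro d hd
    rw [Function.update_of_ne (Finset.notMem_singleton.mp (Finset.mem_compl.mp hd))]
  rw [hrest, Function.update_self, hαj, He_zero_eval]
  have hpow : θ ^ (-((((0:ℕ):ℝ) + 1) / 2)) = θ ^ ((l:ℝ)/2) * θ ^ (-((((l:ℕ):ℝ) + 1) / 2)) := by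
    rw [← Real.rpow_add hθ]
    norm_num
    congr 1
    ring
  rw [hpow]
  ring

lemma sum_update {D : ℕ} (α : Fin D → ℕ) (j : Fin D) (hαj : α j = 0) (l : ℕ) :
    (∑ d, Function.update α j l d) = l + ∑ d, α d := by
  classical
  rw [Finset.sum_update_of_mem (Finset.mem_univ j)]
  conv_rhs => rw [Finset.sum_eq_sum_sdiff_singleton_add (Finset.mem_univ j) α]
  rw [hαj, add_zero]

/-- The space `F_M(u,θ)`: the span of `ξ ↦ 𝓗_{θ,α}((ξ-u)/√θ)` over `|α| ≤ M`. -/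
noncomputable def FMspace (D M : ℕ) (u : Fin D → ℝ) (θ : ℝ) :
    Submodule ℝ ((Fin D → ℝ) → ℝ) :=
  Submodule.span ℝ
    {g | ∃ α : Fin D → ℕ, (∑ d, α d) ≤ M ∧
      g = fun ξ => Hb θ α (fun d => (ξ d - u d) / Real.sqrt θ)}


/-- for a zero `x_i` of `He_{m+1}` with Lagrange polynomial `p_{i,m}`, and any
multi-index `α` with `|α| = M − m` and `α_j = 0`, the function `p_{i,m}(v_j)𝓗_{θ,α}(v)`
is an eigenvector of `f ↦ Π(v_j f)` with eigenvalue `x_i`: it belongs to `F_M(u,θ)` and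
`v_j·p_{i,m}(v_j)𝓗_{θ,α}(v) − x_i·p_{i,m}(v_j)𝓗_{θ,α}(v)` lies in the span of the
basis functions of order exactly `M+1` (the part discarded by the truncation `Π`). -/
theorem stmt7 (D M : ℕ) (hD : 1 ≤ D) (hM : 2 ≤ M)
    (u : Fin D → ℝ) (θ : ℝ) (hθ : 0 < θ) (j : Fin D)
    (m : ℕ) (hm : m ≤ M) (xi : ℝ) (hxi : He (m + 1) xi = 0)
    (p : Polynomial ℝ) (hdeg : p.degree ≤ m) (hpxi : p.eval xi = 1)
    (hpz : ∀ y : ℝ, He (m + 1) y = 0 → y ≠ xi → p.eval y = 0)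
    (α : Fin D → ℕ) (hα : (∑ d, α d) = M - m) (hαj : α j = 0) :
    (fun ξ : Fin D → ℝ => p.eval ((ξ j - u j) / Real.sqrt θ) *
        Hb θ α (fun d => (ξ d - u d) / Real.sqrt θ)) ∈ FMspace D M u θ ∧
    ((fun ξ : Fin D → ℝ => (ξ j - u j) / Real.sqrt θ *
          (p.eval ((ξ j - u j) / Real.sqrt θ) * Hb θ α (fun d => (ξ d - u d) / Real.sqrt θ)))
        - (fun ξ : Fin D → ℝ => xi *
          (p.eval ((ξ j - u j) / Real.sqrt θ) * Hb θ α (fun d => (ξ d - u d) / Real.sqrt θ)))) ∈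
      Submodule.span ℝ
        {g | ∃ β : Fin D → ℕ, (∑ d, β d) = M + 1 ∧
          g = fun ξ => Hb θ β (fun d => (ξ d - u d) / Real.sqrt θ)} := by
  constructor
  · -- Part 1
    obtain ⟨c, hc⟩ := hermite_expand m p hdeg
    have key : (fun ξ : Fin D → ℝ => p.eval ((ξ j - u j) / Real.sqrt θ) *
        Hb θ α (fun d => (ξ d - u d) / Real.sqrt θ))
        = ∑ l ∈ Finset.range (m+1), (c l * θ ^ ((l:ℝ)/2)) •
          (fun ξ : Fin D → ℝ => Hb θ (Function.update α j l)
            (fun d => (ξ d - u d) / Real.sqrt θ)) := by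
      funext ξ
      rw [Finset.sum_apply]
      simp only [Pi.smul_apply, smul_eq_mul]
      rw [hc, Finset.sum_mul]
      apply Finset.sum_congr rfl
      intro l _
      have h2 : He l ((ξ j - u j) / Real.sqrt θ) *
          Hb θ α (fun d => (ξ d - u d) / Real.sqrt θ)
          = θ ^ ((l:ℝ)/2) * Hb θ (Function.update α j l)
            (fun d => (ξ d - u d) / Real.sqrt θ) :=
        Hb_mul θ hθ α j hαj l (fun d => (ξ d - u d) / Real.sqrt θ)
      rw [mul_assoc, h2]
      ring
    rw [FMspace, key]
    apply Submodule.sum_mem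
    intro l hl
    apply Submodule.smul_mem
    apply Submodule.subset_span
    refine ⟨Function.update α j l, ?_, rfl⟩
    rw [sum_update α j hαj l, hα]
    have : l ≤ m := by simpa [Nat.lt_succ_iff] using hl
    omega
  · -- Part 2
    have hfac := lagrange_factor m xi hxi p hdeg hpxi hpz
    have key : ((fun ξ : Fin D → ℝ => (ξ j - u j) / Real.sqrt θ *
          (p.eval ((ξ j - u j) / Real.sqrt θ) * Hb θ α (fun d => (ξ d - u d) / Real.sqrt θ)))
        - (fun ξ : Fin D → ℝ => xi *
          (p.eval ((ξ j - u j) / Real.sqrt θ) * Hb θ α (fun d => (ξ d - u d) / Real.sqrt θ))))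
        = (p.coeff m * θ ^ (((m+1:ℕ):ℝ)/2)) •
          (fun ξ : Fin D → ℝ => Hb θ (Function.update α j (m+1))
            (fun d => (ξ d - u d) / Real.sqrt θ)) := by
      funext ξ
      simp only [Pi.sub_apply, Pi.smul_apply, smul_eq_mul]
      have h2 : He (m+1) ((ξ j - u j) / Real.sqrt θ) *
          Hb θ α (fun d => (ξ d - u d) / Real.sqrt θ)
          = θ ^ (((m+1:ℕ):ℝ)/2) * Hb θ (Function.update α j (m+1))
            (fun d => (ξ d - u d) / Real.sqrt θ) :=
        Hb_mul θ hθ α j hαj (m+1) (fun d => (ξ d - u d) / Real.sqrt θ)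
      have h3 := hfac ((ξ j - u j) / Real.sqrt θ)
      calc (ξ j - u j) / Real.sqrt θ *
            (p.eval ((ξ j - u j) / Real.sqrt θ) * Hb θ α (fun d => (ξ d - u d) / Real.sqrt θ))
          - xi * (p.eval ((ξ j - u j) / Real.sqrt θ) *
            Hb θ α (fun d => (ξ d - u d) / Real.sqrt θ))
          = ((ξ j - u j) / Real.sqrt θ - xi) * p.eval ((ξ j - u j) / Real.sqrt θ) *
            Hb θ α (fun d => (ξ d - u d) / Real.sqrt θ) := by ring
        _ = p.coeff m * (He (m+1) ((ξ j - u j) / Real.sqrt θ) *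
            Hb θ α (fun d => (ξ d - u d) / Real.sqrt θ)) := by rw [h3]; ring
        _ = p.coeff m * θ ^ (((m+1:ℕ):ℝ)/2) *
            Hb θ (Function.update α j (m+1)) (fun d => (ξ d - u d) / Real.sqrt θ) := by
            rw [h2]; ring
    rw [key]
    apply Submodule.smul_mem
    apply Submodule.subset_span
    refine ⟨Function.update α j (m+1), ?_, rfl⟩
    rw [sum_update α j hαj (m+1), hα]
    omega
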